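/- Let k be a perfect field of characteristic p > 0, S = k[x_1,…,x_n], e ≥ 1, q = p^e, and J ⊆ S an ideal. Then there exists a smallest ideal A ⊆ S with the property J ⊆ A^{[q]}; that is, there is an ideal A with J ⊆ A^{[q]} such that A ⊆ B for every ideal B ⊆ S with J ⊆ B^{[q]}. -/

import Mathlib

/-- The `q`-th Frobenius power `I^{[q]}` of an ideal: the ideal generated by
the `q`-th powers of the elements of `I`. -/
def frobPow {S : Type*} [CommRing S] (q : ℕ) (A : Ideal S) : Ideal S :=
  Ideal.span ((fun f => f ^ q) '' (A : Set S))

open MvPolynomial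

namespace FrobPowAux

variable {k : Type*} [Field k] {n : ℕ}

lemma qsmul_inj {q : ℕ} (hq : 0 < q) :
    Function.Injective (fun m : Fin n →₀ ℕ => q • m) := by
  intro a b h
  ext i
  have hi := DFunLike.congr_fun h i
  simp only [Finsupp.smul_apply, smul_eq_mul] at hi
  exact Nat.eq_of_mul_eq_mul_left hq hi

lemma qsmul_add_inj {q : ℕ} (hq : 0 < q) (c : Fin n →₀ ℕ) :
    Function.Injective (fun m : Fin n →₀ ℕ => q • m + c) := by
  intro a b h
  exact qsmul_inj hq (by simpa using add_right_cancel h)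

variable (p e : ℕ) [hpf : Fact p.Prime] [CharP k p] [ExpChar k p] [PerfectRing k p]

lemma hq : 0 < p ^ e := pow_pos hpf.out.pos e

/-- The `c`-component operator: `coeff m (D c f) = ρ (coeff (q•m+c) f)`. -/
noncomputable def D (c : Fin n →₀ ℕ) (f : MvPolynomial (Fin n) k) :
    MvPolynomial (Fin n) k :=
  MvPolynomial.map ((iterateFrobeniusEquiv k p e).symm : k →+* k)
    (AddMonoidAlgebra.ofCoeff (Finsupp.comapDomain (fun m => p ^ e • m + c) (AddMonoidAlgebra.coeff f)
      ((qsmul_add_inj (hq p e) c).injOn)))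

lemma coeff_D (c m : Fin n →₀ ℕ) (f : MvPolynomial (Fin n) k) :
    coeff m (D p e c f) =
      (iterateFrobeniusEquiv k p e).symm (coeff (p ^ e • m + c) f) := by
  rw [D, coeff_map]
  rfl

lemma rho_pow (x : k) : (iterateFrobeniusEquiv k p e).symm x ^ p ^ e = x := by
  have := (iterateFrobeniusEquiv k p e).apply_symm_apply x
  rwa [iterateFrobeniusEquiv_def] at this

lemma rho_pow' (x : k) : (iterateFrobeniusEquiv k p e).symm (x ^ p ^ e) = x := by
  have : x ^ p ^ e = iterateFrobeniusEquiv k p e x := rfl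
  rw [this, RingEquiv.symm_apply_apply]

lemma pow_q_eq (b : MvPolynomial (Fin n) k) :
    b ^ p ^ e = ∑ m ∈ b.support, monomial (p ^ e • m) (coeff m b ^ p ^ e) := by
  haveI : ExpChar (MvPolynomial (Fin n) k) p := ExpChar.prime hpf.out
  conv_lhs => rw [← support_sum_monomial_coeff b]
  have := map_sum (iterateFrobenius (MvPolynomial (Fin n) k) p e)
    (fun m => monomial m (coeff m b)) b.support
  simp only [iterateFrobenius_def] at this
  rw [this]
  refine Finset.sum_congr rfl fun m _ => ?_
  rw [monomial_pow]

lemma coeff_pow_q (b : MvPolynomial (Fin n) k) (u : Fin n →₀ ℕ) :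
    coeff (p ^ e • u) (b ^ p ^ e) = coeff u b ^ p ^ e := by
  rw [pow_q_eq, coeff_sum]
  rw [Finset.sum_eq_single u]
  · simp [coeff_monomial]
  · intro m _ hm
    rw [coeff_monomial, if_neg]
    intro hc
    exact hm (qsmul_inj (hq p e) hc)
  · intro hu
    have : coeff u b = 0 := notMem_support_iff.mp hu
    simp [coeff_monomial, this, zero_pow (hq p e).ne']

lemma coeff_pow_q_ne (b : MvPolynomial (Fin n) k) (v : Fin n →₀ ℕ)
    (h : ∀ u, p ^ e • u ≠ v) : coeff v (b ^ p ^ e) = 0 := by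
  rw [pow_q_eq, coeff_sum]
  refine Finset.sum_eq_zero fun m _ => ?_
  rw [coeff_monomial, if_neg (h m)]

lemma D_mul_pow (c : Fin n →₀ ℕ) (hc : ∀ i, c i < p ^ e)
    (h b : MvPolynomial (Fin n) k) :
    D p e c (h * b ^ p ^ e) = b * D p e c h := by
  apply MvPolynomial.ext
  intro μ
  rw [coeff_D, coeff_mul, coeff_mul, map_sum]
  simp only [coeff_D]
  symm
  refine Finset.sum_bij_ne_zero (fun y _ _ => (p ^ e • y.2 + c, p ^ e • y.1)) ?_ ?_ ?_ ?_
  · intro y hy _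
    rw [Finset.HasAntidiagonal.mem_antidiagonal] at hy ⊢
    calc p ^ e • y.2 + c + p ^ e • y.1 = p ^ e • (y.1 + y.2) + c := by
          rw [smul_add]; abel
      _ = p ^ e • μ + c := by rw [hy]
  · intro y₁ _ _ y₂ _ _ hEq
    have h1 : p ^ e • y₁.2 + c = p ^ e • y₂.2 + c := congrArg Prod.fst hEq
    have h2 : p ^ e • y₁.1 = p ^ e • y₂.1 := congrArg Prod.snd hEq
    exact Prod.ext (qsmul_inj (hq p e) h2) (qsmul_add_inj (hq p e) c h1)
  · -- surjectivity
    intro x hx hgx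
    rw [Finset.HasAntidiagonal.mem_antidiagonal] at hx
    have hne : coeff x.1 h * coeff x.2 (b ^ p ^ e) ≠ 0 := by
      intro h0
      apply hgx
      rw [h0, map_zero]
    have hb2 : coeff x.2 (b ^ p ^ e) ≠ 0 := right_ne_zero_of_mul hne
    have hh1 : coeff x.1 h ≠ 0 := left_ne_zero_of_mul hne
    obtain ⟨u, hu⟩ : ∃ u, p ^ e • u = x.2 := by
      by_contra hcon
      push_neg at hcon
      exact hb2 (coeff_pow_q_ne p e b x.2 hcon)
    have hbu : coeff u b ≠ 0 := by
      intro h0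
      rw [← hu, coeff_pow_q, h0, zero_pow (hq p e).ne'] at hb2
      exact hb2 rfl
    have huμ : u ≤ μ := by
      rw [Finsupp.le_def]
      intro i
      have hi : x.1 i + p ^ e * u i = p ^ e * μ i + c i := by
        have := DFunLike.congr_fun hx i
        rw [← hu] at this
        simpa [Finsupp.add_apply, Finsupp.smul_apply, mul_comm] using this
      by_contra hlt
      push_neg at hlt
      have : p ^ e * (μ i + 1) ≤ p ^ e * u i := Nat.mul_le_mul_left _ hlt
      rw [Nat.mul_succ] at this
      have hci := hc i
      omega
    have hsum : u + (μ - u) = μ := add_tsub_cancel_of_le huμ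
    have hx1 : x.1 = p ^ e • (μ - u) + c := by
      have key : x.1 + x.2 = (p ^ e • (μ - u) + c) + x.2 := by
        rw [hx, ← hu]
        calc p ^ e • μ + c = p ^ e • (u + (μ - u)) + c := by rw [hsum]
          _ = (p ^ e • (μ - u) + c) + p ^ e • u := by rw [smul_add]; abel
      exact add_right_cancel key
    refine ⟨(u, μ - u), Finset.HasAntidiagonal.mem_antidiagonal.mpr hsum, ?_, ?_⟩
    · simp only
      rw [← hx1]
      exact mul_ne_zero hbu (fun h0 => hh1 (by
        have := congrArg (iterateFrobeniusEquiv k p e) h0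
        simpa using this))
    · simp only
      rw [← hx1, hu]
  · -- term equality
    intro y hy _
    simp only
    rw [map_mul, coeff_pow_q, rho_pow', mul_comm]

lemma D_sum {α : Type*} (c : Fin n →₀ ℕ) (s : Finset α)
    (g : α → MvPolynomial (Fin n) k) :
    D p e c (∑ x ∈ s, g x) = ∑ x ∈ s, D p e c (g x) := by
  apply MvPolynomial.ext
  intro μ
  rw [coeff_D, coeff_sum, coeff_sum, map_sum]
  exact Finset.sum_congr rfl fun x _ => (coeff_D p e c μ (g x)).symm

lemma D_mem (B : Ideal (MvPolynomial (Fin n) k)) (c : Fin n →₀ ℕ)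
    (hc : ∀ i, c i < p ^ e) (f : MvPolynomial (Fin n) k)
    (hf : f ∈ frobPow (p ^ e) B) : D p e c f ∈ B := by
  rw [frobPow] at hf
  obtain ⟨a, hsupp, hsum⟩ := Submodule.mem_span_set.mp hf
  rw [← hsum, Finsupp.sum, D_sum]
  refine Ideal.sum_mem B fun x hx => ?_
  obtain ⟨b, hbB, hbx⟩ := hsupp hx
  rw [smul_eq_mul, ← hbx]
  rw [D_mul_pow p e c hc]
  exact Ideal.mul_mem_right _ B hbB

lemma decomp (f : MvPolynomial (Fin n) k) :
    f = ∑ c ∈ Finset.Iic (Finsupp.equivFunOnFinite.symm fun _ : Fin n => p ^ e - 1),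
          monomial c 1 * (D p e c f) ^ p ^ e := by
  apply MvPolynomial.ext
  intro μ
  rw [coeff_sum]
  set c₀ : Fin n →₀ ℕ := Finsupp.mapRange (· % p ^ e) (Nat.zero_mod _) μ with hc₀
  set w : Fin n →₀ ℕ := Finsupp.mapRange (· / p ^ e) (Nat.zero_div _) μ with hw
  have hc₀succ : ∀ i, c₀ i = μ i % p ^ e := fun i => Finsupp.mapRange_apply
  have hwμ : ∀ i, w i = μ i / p ^ e := fun i => Finsupp.mapRange_apply
  have hmem : c₀ ∈ Finset.Iic (Finsupp.equivFunOnFinite.symm fun _ : Fin n => p ^ e - 1) := by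
    rw [Finset.mem_Iic, Finsupp.le_def]
    intro i
    have : c₀ i < p ^ e := by rw [hc₀succ]; exact Nat.mod_lt _ (hq p e)
    rw [Finsupp.coe_equivFunOnFinite_symm]
    exact Nat.le_sub_one_of_lt this
  have hqw : p ^ e • w + c₀ = μ := by
    ext i
    simp only [Finsupp.add_apply, Finsupp.smul_apply, smul_eq_mul, hc₀succ, hwμ]
    exact Nat.div_add_mod _ _
  rw [Finset.sum_eq_single c₀]
  · rw [coeff_monomial_mul', if_pos (by
      rw [Finsupp.le_def]; intro i; rw [hc₀succ]; exact Nat.mod_le _ _), one_mul]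
    have hμc : μ - c₀ = p ^ e • w := by
      ext i
      simp only [Finsupp.tsub_apply, Finsupp.smul_apply, smul_eq_mul, hc₀succ, hwμ]
      exact Nat.sub_eq_of_eq_add (Nat.div_add_mod (μ i) (p ^ e)).symm
    rw [hμc, coeff_pow_q, coeff_D, hqw, rho_pow]
  · intro c hcmem hne
    rw [coeff_monomial_mul']
    split_ifs with hle
    · rw [one_mul]
      refine coeff_pow_q_ne p e _ _ fun u hu => ?_
      obtain ⟨i, hi⟩ := Finsupp.ne_iff.mp hne
      have hcle : c i < p ^ e := by
        rw [Finset.mem_Iic, Finsupp.le_def] at hcmem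
        have h2 := hcmem i
        rw [Finsupp.coe_equivFunOnFinite_symm] at h2
        have hq' : 0 < p ^ e := pow_pos hpf.out.pos e
        omega
      have hcμ : c i ≤ μ i := (Finsupp.le_def.mp hle) i
      have hui := DFunLike.congr_fun hu i
      simp only [Finsupp.smul_apply, Finsupp.tsub_apply, smul_eq_mul] at hui
      apply hi
      rw [hc₀succ]
      have : μ i = p ^ e * u i + c i := by omega
      rw [this, Nat.mul_add_mod, Nat.mod_eq_of_lt hcle]
    · rfl
  · intro habs
    exact absurd hmem habs

end FrobPowAux



/-- There is a smallest ideal `A` with `J ⊆ A^{[q]}`, `q = p^e`. -/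
theorem stmt_8 {k : Type*} [Field k] (p : ℕ) (hp : p.Prime) [CharP k p]
    [PerfectField k]
    (n e : ℕ) (he : 1 ≤ e)
    (J : Ideal (MvPolynomial (Fin n) k)) :
    ∃ A : Ideal (MvPolynomial (Fin n) k),
      J ≤ frobPow (p ^ e) A ∧
      ∀ B : Ideal (MvPolynomial (Fin n) k), J ≤ frobPow (p ^ e) B → A ≤ B := by
  haveI := Fact.mk hp
  haveI : ExpChar k p := ExpChar.prime hp
  refine ⟨sInf {B | J ≤ frobPow (p ^ e) B}, ?_, fun B hB => sInf_le hB⟩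
  intro f hf
  rw [FrobPowAux.decomp p e f]
  refine Ideal.sum_mem _ fun c hcmem => ?_
  have hc : ∀ i, c i < p ^ e := by
    intro i
    rw [Finset.mem_Iic, Finsupp.le_def] at hcmem
    have h2 := hcmem i
    rw [Finsupp.coe_equivFunOnFinite_symm] at h2
    have hq' : 0 < p ^ e := pow_pos hp.pos e
    omega
  refine Ideal.mul_mem_left _ _ (Ideal.subset_span ⟨FrobPowAux.D p e c f, ?_, rfl⟩)
  refine Submodule.mem_sInf.mpr fun B hB => ?_
  exact FrobPowAux.D_mem p e B c hc f (hB hf)
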